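/- Let ℓ ≥ 1 and let λ_{1,1}, …, λ_{ℓ,1} be nonzero real numbers; set μ₀ = 1, μ_m = ∏_{j=1}^{m} λ_{j,1}, and λ_{m,n} = μ_m/(μ_{n−1} μ_{m−n}) for 1 ≤ n ≤ m ≤ ℓ. On the chain of N sites (periodic boundary conditions or special boundary conditions s = (c₁,c_N)), let M : V_N → V_N be the invertible diagonal linear map M e_σ = (∏_{k=1}^{ℓ} μ_k^{−m_k(σ)}) e_σ, where m_k(σ) is the number of clusters of length k in σ. Then M Q_λ M^{−1} = Q, the unit-coupling supercharge (all amplitudes equal to 1). In particular, dim ker(Q_λ restricted to fermion number f)/im(Q_λ) = dim H_Q^f for every f. -/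

import Mathlib

attribute [local instance 10] Classical.propDecidable

noncomputable section

/-- A configuration of `N` sites: `true` = occupied, `false` = empty. -/
abbrev Config (N : ℕ) := Fin N → Bool

/-- Extension of a configuration to all of `ℕ`, by empty sites outside the chain. -/
def extc {N : ℕ} (σ : Config N) (t : ℕ) : Bool :=
  if h : t < N then σ ⟨t, h⟩ else false

/-- The fermion number: the number of occupied sites. -/
def fermions {N : ℕ} (σ : Config N) : ℕ :=
  (Finset.univ.filter fun i => σ i = true).card

/-- Allowed configurations of the open chain of `N` sites with exclusion parameter `ℓ`
and special boundary conditions `(c₁, cN)`: no cluster is longer than `ℓ`, the cluster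
containing the first site (if occupied) has length at most `c₁`, and the cluster
containing the last site (if occupied) has length at most `cN`. -/
def OpenOK (N ℓ c₁ cN : ℕ) (σ : Config N) : Prop :=
  (∀ a : ℕ, ¬ ∀ k ≤ ℓ, extc σ (a + k) = true) ∧
  (¬ (c₁ + 1 ≤ N ∧ ∀ k ≤ c₁, extc σ k = true)) ∧
  (¬ (cN + 1 ≤ N ∧ ∀ k ≤ cN, extc σ (N - 1 - k) = true))

/-- Cyclic shift of a site of the closed chain by `k` steps. -/
def cyc {N : ℕ} (i : Fin N) (k : ℕ) : Fin N :=
  ⟨(i.1 + k) % N, Nat.mod_lt _ i.pos⟩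

/-- Allowed configurations of the closed chain of `N` sites with periodic boundary
conditions: the chain is not fully occupied and no maximal cyclic run of occupied
sites is longer than `ℓ`. -/
def PerOK (N ℓ : ℕ) (σ : Config N) : Prop :=
  ∀ i : Fin N, ∃ k ≤ ℓ, σ (cyc i k) = false

/-- The fermionic sign `(-1)^{#{j < i : σ j = 1}}`. -/
def sgn {N : ℕ} (σ : Config N) (i : Fin N) : ℂ :=
  (-1 : ℂ) ^ ((Finset.univ.filter fun j => j < i ∧ σ j = true).card)

/-- The Hilbert space `V_N`: complex functions on allowed configurations. -/
abbrev AState (N : ℕ) (OK : Config N → Prop) := {σ : Config N // OK σ} → ℂ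

/-- Matrix of the supercharge with amplitudes `A`, with particle insertion
restricted to the sublattice `S`: the entry `(τ, σ)` is the amplitude (with fermionic
sign) for obtaining `τ` from `σ` by occupying an empty site of `S`. -/
def QmatA (N : ℕ) (OK : Config N → Prop) (S : Fin N → Prop)
    (A : Config N → Fin N → ℂ) :
    Matrix {σ : Config N // OK σ} {σ : Config N // OK σ} ℂ := fun τ σ =>
  ∑ i : Fin N,
    if S i ∧ σ.1 i = false ∧ τ.1 = Function.update σ.1 i true
    then A σ.1 i * sgn σ.1 i else 0

/-- The supercharge with amplitudes `A` restricted to the sublattice `S`, as a linear map. -/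
def QopA (N : ℕ) (OK : Config N → Prop) (S : Fin N → Prop)
    (A : Config N → Fin N → ℂ) : AState N OK →ₗ[ℂ] AState N OK :=
  (QmatA N OK S A).mulVecLin

/-- The unit-coupling supercharge restricted to the sublattice `S`. -/
def Qop (N : ℕ) (OK : Config N → Prop) (S : Fin N → Prop) :
    AState N OK →ₗ[ℂ] AState N OK :=
  QopA N OK S fun _ _ => 1

/-- The subspace `V_{N,f}` of states supported on configurations with fermion number `f`. -/
def gradeV (N : ℕ) (OK : Config N → Prop) (f : ℕ) :
    Submodule ℂ (AState N OK) where
  carrier := {ψ | ∀ σ, fermions σ.1 ≠ f → ψ σ = 0}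
  add_mem' := by
    intro a b ha hb σ h
    show a σ + b σ = 0
    rw [ha σ h, hb σ h, add_zero]
  zero_mem' := by intro σ h; rfl
  smul_mem' := by
    intro c a ha σ h
    show c * a σ = 0
    rw [ha σ h, mul_zero]

/-- Length of the run of occupied sites immediately to the left of site `i` (open chain). -/
def lrunO {N : ℕ} (σ : Config N) (i : Fin N) : ℕ :=
  ((Finset.range N).filter fun r =>
    1 ≤ r ∧ r ≤ i.1 ∧ ∀ k, 1 ≤ k → k ≤ r → extc σ (i.1 - k) = true).card

/-- Length of the run of occupied sites immediately to the right of site `i` (open chain). -/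
def rrunO {N : ℕ} (σ : Config N) (i : Fin N) : ℕ :=
  ((Finset.range N).filter fun r =>
    1 ≤ r ∧ ∀ k, 1 ≤ k → k ≤ r → extc σ (i.1 + k) = true).card

/-- The amplitude `λ_{m(i,σ),n(i,σ)}` for inserting a particle at site `i` of the open
chain: after insertion, `i` is the `n`-th member of an `m`-cluster, with
`m = lrun + rrun + 1` and `n = lrun + 1`. -/
def AmpO {N : ℕ} (lam : ℕ → ℕ → ℝ) (σ : Config N) (i : Fin N) : ℂ :=
  ((lam (lrunO σ i + rrunO σ i + 1) (lrunO σ i + 1) : ℝ) : ℂ)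

/-- Length of the cyclic run of occupied sites immediately to the left of site `i`. -/
def lrunP {N : ℕ} (σ : Config N) (i : Fin N) : ℕ :=
  ((Finset.range N).filter fun r =>
    1 ≤ r ∧ ∀ k, 1 ≤ k → k ≤ r → σ (cyc i (N - k)) = true).card

/-- Length of the cyclic run of occupied sites immediately to the right of site `i`. -/
def rrunP {N : ℕ} (σ : Config N) (i : Fin N) : ℕ :=
  ((Finset.range N).filter fun r =>
    1 ≤ r ∧ ∀ k, 1 ≤ k → k ≤ r → σ (cyc i k) = true).card

/-- The amplitude `λ_{m(i,σ),n(i,σ)}` for inserting a particle at site `i` of the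
closed (periodic) chain. -/
def AmpP {N : ℕ} (lam : ℕ → ℕ → ℝ) (σ : Config N) (i : Fin N) : ℂ :=
  ((lam (lrunP σ i + rrunP σ i + 1) (lrunP σ i + 1) : ℝ) : ℂ)

/-- `μ_m = ∏_{j=1}^m λ_{j,1}` (so `μ₀ = 1`). -/
def muProd (lam1 : ℕ → ℝ) (m : ℕ) : ℝ := ∏ j ∈ Finset.Icc 1 m, lam1 j

/-- `λ_{m,n} = μ_m / (μ_{n-1} μ_{m-n})`. -/
def lamGen (lam1 : ℕ → ℝ) (m n : ℕ) : ℝ :=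
  muProd lam1 m / (muProd lam1 (n - 1) * muProd lam1 (m - n))

/-- The number of clusters of length exactly `k ≥ 1` in a configuration of the open chain. -/
def clustO (N : ℕ) (σ : Config N) (k : ℕ) : ℕ :=
  ((Finset.range N).filter fun j =>
    (j = 0 ∨ extc σ (j - 1) = false) ∧ (∀ t < k, extc σ (j + t) = true) ∧
      extc σ (j + k) = false).card

/-- The number of cyclic clusters of length exactly `k ≥ 1` in a configuration of the
closed chain. -/
def clustP (N : ℕ) (σ : Config N) (k : ℕ) : ℕ :=
  (Finset.univ.filter fun j : Fin N =>
    σ (cyc j (N - 1)) = false ∧ (∀ t < k, σ (cyc j t) = true) ∧ σ (cyc j k) = false).card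

/-- The diagonal entry `∏_{k=1}^ℓ μ_k^{-m_k(σ)}` of `M` (open chain). -/
def diagO (ℓ N : ℕ) (lam1 : ℕ → ℝ) (σ : Config N) : ℂ :=
  ∏ k ∈ Finset.Icc 1 ℓ, ((muProd lam1 k : ℝ) : ℂ) ^ (-(clustO N σ k : ℤ))

/-- The diagonal entry `∏_{k=1}^ℓ μ_k^{-m_k(σ)}` of `M` (closed chain). -/
def diagP (ℓ N : ℕ) (lam1 : ℕ → ℝ) (σ : Config N) : ℂ :=
  ∏ k ∈ Finset.Icc 1 ℓ, ((muProd lam1 k : ℝ) : ℂ) ^ (-(clustP N σ k : ℤ))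

/-- Cocycles at grade `f` for the supercharge with amplitudes `A`. -/
def cocyclesA (N : ℕ) (OK : Config N → Prop) (A : Config N → Fin N → ℂ) (f : ℕ) :
    Submodule ℂ (AState N OK) :=
  LinearMap.ker (QopA N OK (fun _ => True) A) ⊓ gradeV N OK f

/-- Coboundaries at grade `f` for the supercharge with amplitudes `A`. -/
def coboundsA (N : ℕ) (OK : Config N → Prop) (A : Config N → Fin N → ℂ) (f : ℕ) :
    Submodule ℂ (AState N OK) :=
  (gradeV N OK (f - 1)).map (QopA N OK (fun _ => True) A)

/-- The cohomology at grade `f` for the supercharge with amplitudes `A`. -/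
abbrev CohSpaceA (N : ℕ) (OK : Config N → Prop) (A : Config N → Fin N → ℂ) (f : ℕ) :=
  cocyclesA N OK A f ⧸ ((coboundsA N OK A f).comap (cocyclesA N OK A f).subtype)

/-- The dimension of the cohomology at grade `f` for the supercharge with amplitudes `A`. -/
def cohDimA (N : ℕ) (OK : Config N → Prop) (A : Config N → Fin N → ℂ) (f : ℕ) : ℕ :=
  Module.finrank ℂ (CohSpaceA N OK A f)
/-! ### Auxiliary lemmas -/

section Aux

open Finset

lemma aux_dc_eq_Icc (A : Finset ℕ) (h0 : 0 ∉ A)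
    (hdc : ∀ r ∈ A, ∀ r', 1 ≤ r' → r' ≤ r → r' ∈ A) :
    A = Finset.Icc 1 A.card := by
  rcases A.eq_empty_or_nonempty with h | h
  · simp [h]
  · have hmax := A.max'_mem h
    have hA : A = Finset.Icc 1 (A.max' h) := by
      apply Finset.Subset.antisymm
      · intro r hr
        simp only [Finset.mem_Icc]
        refine ⟨Nat.one_le_iff_ne_zero.2 ?_, A.le_max' r hr⟩
        rintro rfl; exact h0 hr
      · intro r hr
        simp only [Finset.mem_Icc] at hr
        exact hdc _ hmax _ hr.1 hr.2
    have hcard : A.card = A.max' h := by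
      conv_lhs => rw [hA]
      rw [Nat.card_Icc]; omega
    rw [hcard]; exact hA

lemma aux_card_split (s : Finset ℕ) (L R : ℕ) (hLR : L ≠ R) :
    s.card = (s \ {L, R}).card + (if L ∈ s then 1 else 0) + (if R ∈ s then 1 else 0) := by
  have h := Finset.card_sdiff_add_card_inter s ({L, R} : Finset ℕ)
  have hfe : s ∩ {L, R} = ({L, R} : Finset ℕ).filter (· ∈ s) := by
    ext x
    simp only [Finset.mem_inter, Finset.mem_filter]
    tauto
  have h2 : (s ∩ {L, R}).card = (if L ∈ s then 1 else 0) + (if R ∈ s then 1 else 0) := by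
    rw [hfe, Finset.filter_insert, Finset.filter_singleton]
    by_cases hL : L ∈ s <;> by_cases hR : R ∈ s <;>
      simp [hL, hR, Finset.card_insert_of_notMem, hLR]
  omega

end Aux
section OpenChain

open Finset

lemma extc_lt_of_true {N : ℕ} {σ : Config N} {t : ℕ} (h : extc σ t = true) : t < N := by
  by_contra h'
  rw [extc, dif_neg h'] at h
  exact Bool.false_ne_true h

lemma extc_update {N : ℕ} (σ : Config N) (i : Fin N) (t : ℕ) :
    extc (Function.update σ i true) t = if t = i.1 then true else extc σ t := by
  unfold extc
  by_cases h : t < N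
  · rw [dif_pos h]
    rcases eq_or_ne t i.1 with he | he
    · rw [if_pos he]
      have hfe : (⟨t, h⟩ : Fin N) = i := Fin.ext he
      rw [hfe, Function.update_self]
    · rw [if_neg he]
      have hfe : (⟨t, h⟩ : Fin N) ≠ i := by
        intro hh; exact he (congrArg Fin.val hh)
      rw [Function.update_of_ne hfe, dif_pos h]
  · rw [dif_neg h]
    have : t ≠ i.1 := by intro hh; exact h (hh ▸ i.isLt)
    rw [if_neg this, dif_neg h]

lemma lrunO_key {N : ℕ} (σ : Config N) (i : Fin N) (r : ℕ) :
    (1 ≤ r ∧ r ≤ i.1 ∧ ∀ k, 1 ≤ k → k ≤ r → extc σ (i.1 - k) = true) ↔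
      (1 ≤ r ∧ r ≤ lrunO σ i) := by
  have hA : ((Finset.range N).filter fun r =>
      1 ≤ r ∧ r ≤ i.1 ∧ ∀ k, 1 ≤ k → k ≤ r → extc σ (i.1 - k) = true)
      = Finset.Icc 1 (lrunO σ i) := by
    apply aux_dc_eq_Icc
    · simp
    · intro r hr r' h1 h2
      simp only [Finset.mem_filter, Finset.mem_range] at hr ⊢
      obtain ⟨hrN, _, hri, hocc⟩ := hr
      exact ⟨lt_of_le_of_lt h2 hrN, h1, le_trans h2 hri,
        fun k hk1 hk2 => hocc k hk1 (le_trans hk2 h2)⟩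
  constructor
  · rintro ⟨h1, h2, h3⟩
    have hmem : r ∈ Finset.Icc 1 (lrunO σ i) := by
      rw [← hA]
      simp only [Finset.mem_filter, Finset.mem_range]
      exact ⟨lt_of_le_of_lt h2 i.isLt, h1, h2, h3⟩
    simpa using hmem
  · rintro ⟨h1, h2⟩
    have hmem : r ∈ ((Finset.range N).filter fun r =>
        1 ≤ r ∧ r ≤ i.1 ∧ ∀ k, 1 ≤ k → k ≤ r → extc σ (i.1 - k) = true) := by
      rw [hA]; simp [h1, h2]
    simp only [Finset.mem_filter] at hmem
    exact hmem.2

lemma rrunO_key {N : ℕ} (σ : Config N) (i : Fin N) (r : ℕ) :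
    (1 ≤ r ∧ ∀ k, 1 ≤ k → k ≤ r → extc σ (i.1 + k) = true) ↔
      (1 ≤ r ∧ r ≤ rrunO σ i) := by
  have hA : ((Finset.range N).filter fun r =>
      1 ≤ r ∧ ∀ k, 1 ≤ k → k ≤ r → extc σ (i.1 + k) = true)
      = Finset.Icc 1 (rrunO σ i) := by
    apply aux_dc_eq_Icc
    · simp
    · intro r hr r' h1 h2
      simp only [Finset.mem_filter, Finset.mem_range] at hr ⊢
      obtain ⟨hrN, _, hocc⟩ := hr
      exact ⟨lt_of_le_of_lt h2 hrN, h1, fun k hk1 hk2 => hocc k hk1 (le_trans hk2 h2)⟩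
  constructor
  · rintro ⟨h1, h2⟩
    have hrN : r < N := by
      have := extc_lt_of_true (h2 r h1 le_rfl); omega
    have hmem : r ∈ Finset.Icc 1 (rrunO σ i) := by
      rw [← hA]
      simp only [Finset.mem_filter, Finset.mem_range]
      exact ⟨hrN, h1, h2⟩
    simpa using hmem
  · rintro ⟨h1, h2⟩
    have hmem : r ∈ ((Finset.range N).filter fun r =>
        1 ≤ r ∧ ∀ k, 1 ≤ k → k ≤ r → extc σ (i.1 + k) = true) := by
      rw [hA]; simp [h1, h2]
    simp only [Finset.mem_filter] at hmem
    exact hmem.2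

lemma lrunO_facts {N : ℕ} (σ : Config N) (i : Fin N) :
    lrunO σ i ≤ i.1 ∧
    (∀ k, 1 ≤ k → k ≤ lrunO σ i → extc σ (i.1 - k) = true) ∧
    (lrunO σ i = i.1 ∨ extc σ (i.1 - lrunO σ i - 1) = false) ∧
    (∀ r, 1 ≤ r → r ≤ i.1 → (∀ k, 1 ≤ k → k ≤ r → extc σ (i.1 - k) = true) →
      r ≤ lrunO σ i) := by
  set a := lrunO σ i with ha
  have key := lrunO_key σ i
  have hmem : ∀ k, 1 ≤ k → k ≤ a → extc σ (i.1 - k) = true := by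
    intro k h1 h2
    obtain ⟨_, _, h⟩ := (key k).2 ⟨h1, h2⟩
    exact h k h1 le_rfl
  have hle : a ≤ i.1 := by
    rcases Nat.eq_zero_or_pos a with h | h
    · omega
    · exact ((key a).2 ⟨h, le_rfl⟩).2.1
  refine ⟨hle, hmem, ?_, fun r h1 h2 h3 => ((key r).1 ⟨h1, h2, h3⟩).2⟩
  by_cases heq : a = i.1
  · exact Or.inl heq
  · right
    by_contra hocc
    simp only [Bool.not_eq_false] at hocc
    have hook : ∀ k, 1 ≤ k → k ≤ a + 1 → extc σ (i.1 - k) = true := by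
      intro k hk1 hk2
      rcases Nat.lt_or_ge k (a + 1) with h | h
      · exact hmem k hk1 (by omega)
      · have hke : k = a + 1 := by omega
        rw [hke, show i.1 - (a + 1) = i.1 - a - 1 from by omega]
        exact hocc
    have := ((key (a + 1)).1 ⟨by omega, by omega, hook⟩).2
    omega

lemma rrunO_facts {N : ℕ} (σ : Config N) (i : Fin N) :
    (∀ k, 1 ≤ k → k ≤ rrunO σ i → extc σ (i.1 + k) = true) ∧
    extc σ (i.1 + rrunO σ i + 1) = false := by
  set b := rrunO σ i with hb
  have key := rrunO_key σ i
  have hmem : ∀ k, 1 ≤ k → k ≤ b → extc σ (i.1 + k) = true := by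
    intro k h1 h2
    obtain ⟨_, h⟩ := (key k).2 ⟨h1, h2⟩
    exact h k h1 le_rfl
  refine ⟨hmem, ?_⟩
  by_contra hocc
  simp only [Bool.not_eq_false] at hocc
  have hook : ∀ k, 1 ≤ k → k ≤ b + 1 → extc σ (i.1 + k) = true := by
    intro k hk1 hk2
    rcases Nat.lt_or_ge k (b + 1) with h | h
    · exact hmem k hk1 (by omega)
    · have hke : k = b + 1 := by omega
      rw [hke, show i.1 + (b + 1) = i.1 + b + 1 from by omega]
      exact hocc
  have := ((key (b + 1)).1 ⟨by omega, hook⟩).2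
  omega

end OpenChain
section OpenCluster

open Finset

lemma clustO_update {N : ℕ} (σ : Config N) (i : Fin N) (hσi : σ i = false)
    (k : ℕ) (hk : 1 ≤ k) :
    clustO N σ k + (if k = lrunO σ i + rrunO σ i + 1 then 1 else 0) =
      clustO N (Function.update σ i true) k
        + (if k = lrunO σ i then 1 else 0) + (if k = rrunO σ i then 1 else 0) := by
  obtain ⟨hF2, hF1, hF3, hF1'⟩ := lrunO_facts σ i
  obtain ⟨hF4, hF5⟩ := rrunO_facts σ i
  set a := lrunO σ i with ha
  set b := rrunO σ i with hb
  set τ := Function.update σ i true with hτ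
  set L := i.1 - a with hL
  set R := i.1 + 1 with hR
  set m := a + b + 1 with hm
  have hiN := i.isLt
  have hσi' : extc σ i.1 = false := by
    rw [extc, dif_pos hiN]
    simpa using hσi
  have hup : ∀ t, extc τ t = if t = i.1 then true else extc σ t := extc_update σ i
  have hmono : ∀ t, extc σ t = true → extc τ t = true := by
    intro t ht; rw [hup]; split <;> simp [ht]
  have hmono' : ∀ t, extc τ t = false → extc σ t = false := by
    intro t ht; rw [hup] at ht
    split at ht
    · exact absurd ht (by simp)
    · exact ht
  have hne : ∀ t, t ≠ i.1 → extc τ t = extc σ t := by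
    intro t ht; rw [hup, if_neg ht]
  set Pσ := fun j => (j = 0 ∨ extc σ (j - 1) = false) ∧
      (∀ t < k, extc σ (j + t) = true) ∧ extc σ (j + k) = false with hPσ
  set Pτ := fun j => (j = 0 ∨ extc τ (j - 1) = false) ∧
      (∀ t < k, extc τ (j + t) = true) ∧ extc τ (j + k) = false with hPτ
  -- Claim B
  have claimB : Pσ L ↔ k = a := by
    constructor
    · rintro ⟨hb1, hb2, hb3⟩
      by_contra hka
      rcases Nat.lt_or_ge k a with h | h
      · have hocc := hF1 (a - k) (by omega) (by omega)
        rw [show i.1 - (a - k) = L + k from by omega] at hocc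
        rw [hocc] at hb3; simp at hb3
      · have h' : a < k := by omega
        have hocc := hb2 a h'
        rw [show L + a = i.1 from by omega, hσi'] at hocc; simp at hocc
    · rintro rfl
      refine ⟨?_, ?_, ?_⟩
      · rcases Nat.eq_zero_or_pos L with h0 | h0
        · exact Or.inl h0
        · right
          rw [show L - 1 = i.1 - a - 1 from by omega]
          rcases hF3 with h | h
          · exfalso; omega
          · exact h
      · intro t ht
        rw [show L + t = i.1 - (a - t) from by omega]
        exact hF1 (a - t) (by omega) (by omega)
      · rw [show L + a = i.1 from by omega]
        exact hσi'
  -- Claim C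
  have claimC : Pτ L ↔ k = m := by
    constructor
    · rintro ⟨hb1, hb2, hb3⟩
      by_contra hkm
      rcases Nat.lt_or_ge k m with h | h
      · have hocc : extc τ (L + k) = true := by
          rcases Nat.lt_trichotomy (L + k) i.1 with h' | h' | h'
          · apply hmono
            rw [show L + k = i.1 - (a - k) from by omega]
            exact hF1 (a - k) (by omega) (by omega)
          · rw [hup, if_pos h']
          · apply hmono
            rw [show L + k = i.1 + (L + k - i.1) from by omega]
            exact hF4 (L + k - i.1) (by omega) (by omega)
        rw [hocc] at hb3; simp at hb3
      · have hocc := hb2 m (by omega)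
        rw [show L + m = i.1 + b + 1 from by omega, hne _ (by omega), hF5] at hocc
        simp at hocc
    · rintro rfl
      refine ⟨?_, ?_, ?_⟩
      · rcases Nat.eq_zero_or_pos L with h0 | h0
        · exact Or.inl h0
        · right
          rw [hne _ (by omega), show L - 1 = i.1 - a - 1 from by omega]
          rcases hF3 with h | h
          · exfalso; omega
          · exact h
      · intro t ht
        rcases Nat.lt_trichotomy (L + t) i.1 with h' | h' | h'
        · apply hmono
          rw [show L + t = i.1 - (a - t) from by omega]
          exact hF1 (a - t) (by omega) (by omega)
        · rw [hup, if_pos h']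
        · apply hmono
          rw [show L + t = i.1 + (L + t - i.1) from by omega]
          exact hF4 (L + t - i.1) (by omega) (by omega)
      · rw [show L + m = i.1 + b + 1 from by omega, hne _ (by omega)]
        exact hF5
  -- Claim D
  have claimD : Pσ R ↔ k = b := by
    constructor
    · rintro ⟨hd1, hd2, hd3⟩
      by_contra hkb
      rcases Nat.lt_or_ge k b with h | h
      · have hocc := hF4 (k + 1) (by omega) (by omega)
        rw [show i.1 + (k + 1) = R + k from by omega] at hocc
        rw [hocc] at hd3; simp at hd3
      · have hocc := hd2 b (by omega)
        rw [show R + b = i.1 + b + 1 from by omega, hF5] at hocc; simp at hocc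
    · rintro rfl
      refine ⟨?_, ?_, ?_⟩
      · right
        rw [show R - 1 = i.1 from by omega]
        exact hσi'
      · intro t ht
        rw [show R + t = i.1 + (t + 1) from by omega]
        exact hF4 (t + 1) (by omega) (by omega)
      · rw [show R + b = i.1 + b + 1 from by omega]
        exact hF5
  -- Claim E
  have claimE : ¬ Pτ R := by
    rintro ⟨h1, -, -⟩
    rcases h1 with h | h
    · omega
    · rw [show R - 1 = i.1 from by omega, hup, if_pos rfl] at h; simp at h
  -- Claim A
  have claimA : ∀ j, j ≠ L → j ≠ R → (Pσ j ↔ Pτ j) := by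
    intro j hjL hjR
    constructor
    · rintro ⟨h1, h2, h3⟩
      have hjk : j + k ≠ i.1 := by
        intro he
        have hka : k ≤ a := by
          apply hF1' k hk (by omega)
          intro k' h1' h2'
          rw [show i.1 - k' = j + (k - k') from by omega]
          exact h2 (k - k') (by omega)
        have hkea : k = a := by
          by_contra hne'
          have hklt : k < a := by omega
          have hj1 : 1 ≤ j := by omega
          have ht : extc σ (j - 1) = true := by
            rw [show j - 1 = i.1 - (k + 1) from by omega]
            exact hF1 (k + 1) (by omega) (by omega)
          rcases h1 with h | h
          · omega
          · rw [h] at ht; simp at ht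
        exact hjL (by omega)
      refine ⟨?_, fun t ht => hmono _ (h2 t ht), ?_⟩
      · rcases h1 with h | h
        · exact Or.inl h
        · rcases Nat.eq_zero_or_pos j with h0 | h0
          · exact Or.inl h0
          · right
            rw [hne _ (by omega)]
            exact h
      · rw [hne _ hjk]
        exact h3
    · rintro ⟨h1, h2, h3⟩
      have hnotin : ¬ (j ≤ i.1 ∧ i.1 < j + k) := by
        rintro ⟨hji, hik⟩
        have hocc : ∀ s, s < k → s ≠ i.1 - j → extc σ (j + s) = true := by
          intro s hs hsne
          have := h2 s hs
          rwa [hne _ (by omega)] at this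
        have hija : i.1 - j ≤ a := by
          rcases Nat.eq_zero_or_pos (i.1 - j) with h0 | h0
          · omega
          · apply hF1' (i.1 - j) h0 (by omega)
            intro k' hk1 hk2
            rw [show i.1 - k' = j + (i.1 - j - k') from by omega]
            exact hocc (i.1 - j - k') (by omega) (by omega)
        have hijea : i.1 - j = a := by
          by_contra hne'
          have hlt : i.1 - j < a := by omega
          have hj1 : 1 ≤ j := by omega
          have ht : extc σ (j - 1) = true := by
            rw [show j - 1 = i.1 - (i.1 - j + 1) from by omega]
            exact hF1 (i.1 - j + 1) (by omega) (by omega)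
          rcases h1 with h | h
          · omega
          · rw [hne _ (by omega)] at h
            rw [h] at ht; simp at ht
        exact hjL (by omega)
      refine ⟨?_, ?_, ?_⟩
      · rcases h1 with h | h
        · exact Or.inl h
        · rcases Nat.eq_zero_or_pos j with h0 | h0
          · exact Or.inl h0
          · exact Or.inr (hmono' _ h)
      · intro t ht
        have := h2 t ht
        rwa [hne _ (by intro he; exact hnotin ⟨by omega, by omega⟩)] at this
      · exact hmono' _ h3
  -- membership facts
  have hLR : L ≠ R := by omega
  have hLmemσ : (L ∈ (Finset.range N).filter Pσ) ↔ k = a := by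
    simp only [Finset.mem_filter, Finset.mem_range]
    constructor
    · intro h; exact claimB.1 h.2
    · intro h; exact ⟨by omega, claimB.2 h⟩
  have hLmemτ : (L ∈ (Finset.range N).filter Pτ) ↔ k = m := by
    simp only [Finset.mem_filter, Finset.mem_range]
    constructor
    · intro h; exact claimC.1 h.2
    · intro h; exact ⟨by omega, claimC.2 h⟩
  have hRmemσ : (R ∈ (Finset.range N).filter Pσ) ↔ k = b := by
    simp only [Finset.mem_filter, Finset.mem_range]
    constructor
    · intro h; exact claimD.1 h.2
    · intro h
      have hocc : extc σ (i.1 + 1) = true := hF4 1 le_rfl (by omega)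
      have := extc_lt_of_true hocc
      exact ⟨by omega, claimD.2 h⟩
  have hRmemτ : R ∉ (Finset.range N).filter Pτ := by
    simp only [Finset.mem_filter, Finset.mem_range]
    rintro ⟨-, h⟩
    exact claimE h
  have hsdiff : ((Finset.range N).filter Pσ) \ {L, R}
      = ((Finset.range N).filter Pτ) \ {L, R} := by
    ext j
    simp only [Finset.mem_sdiff, Finset.mem_filter, Finset.mem_range,
      Finset.mem_insert, Finset.mem_singleton, not_or]
    constructor
    · rintro ⟨⟨hjN, hPj⟩, hjL, hjR⟩
      exact ⟨⟨hjN, (claimA j hjL hjR).1 hPj⟩, hjL, hjR⟩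
    · rintro ⟨⟨hjN, hPj⟩, hjL, hjR⟩
      exact ⟨⟨hjN, (claimA j hjL hjR).2 hPj⟩, hjL, hjR⟩
  have e1 := aux_card_split ((Finset.range N).filter Pσ) L R hLR
  have e2 := aux_card_split ((Finset.range N).filter Pτ) L R hLR
  rw [hsdiff] at e1
  rw [if_congr hLmemσ rfl rfl, if_congr hRmemσ rfl rfl] at e1
  rw [if_congr hLmemτ rfl rfl, if_neg hRmemτ] at e2
  have hclσ : clustO N σ k = ((Finset.range N).filter Pσ).card := rfl
  have hclτ : clustO N τ k = ((Finset.range N).filter Pτ).card := rfl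
  rw [hclσ, hclτ, e1, e2]
  ring
end OpenCluster
section DiagRatio

open Finset

lemma muProd_ne_zero {ℓ : ℕ} {lam1 : ℕ → ℝ} (hnz : ∀ j, 1 ≤ j → j ≤ ℓ → lam1 j ≠ 0)
    {k : ℕ} (hk : k ≤ ℓ) : muProd lam1 k ≠ 0 := by
  unfold muProd
  rw [Finset.prod_ne_zero_iff]
  intro j hj
  simp only [Finset.mem_Icc] at hj
  exact hnz j hj.1 (le_trans hj.2 hk)

lemma prod_ite_mu (ℓ : ℕ) (lam1 : ℕ → ℝ) (c : ℕ) (hc : c ≤ ℓ) :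
    (∏ k ∈ Finset.Icc 1 ℓ, if k = c then ((muProd lam1 k : ℝ) : ℂ) else 1)
      = ((muProd lam1 c : ℝ) : ℂ) := by
  rw [Finset.prod_ite_eq']
  by_cases h0 : c = 0
  · subst h0
    simp [muProd]
  · rw [if_pos (by simp only [Finset.mem_Icc]; omega)]

lemma diag_ratio (ℓ : ℕ) (lam1 : ℕ → ℝ) (hnz : ∀ j, 1 ≤ j → j ≤ ℓ → lam1 j ≠ 0)
    (cσ cτ : ℕ → ℕ) (a b : ℕ) (hmℓ : a + b + 1 ≤ ℓ)
    (hk : ∀ k, 1 ≤ k → k ≤ ℓ →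
      cσ k + (if k = a + b + 1 then 1 else 0)
        = cτ k + (if k = a then 1 else 0) + (if k = b then 1 else 0)) :
    (∏ k ∈ Finset.Icc 1 ℓ, ((muProd lam1 k : ℝ) : ℂ) ^ (-(cσ k : ℤ))) =
      (∏ k ∈ Finset.Icc 1 ℓ, ((muProd lam1 k : ℝ) : ℂ) ^ (-(cτ k : ℤ)))
        * ((muProd lam1 (a + b + 1) : ℝ) : ℂ)
        * ((muProd lam1 a : ℝ) : ℂ)⁻¹ * ((muProd lam1 b : ℝ) : ℂ)⁻¹ := by
  have hμ : ∀ k ∈ Finset.Icc 1 ℓ, ((muProd lam1 k : ℝ) : ℂ) ≠ 0 := by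
    intro k hks
    simp only [Finset.mem_Icc] at hks
    simpa using muProd_ne_zero hnz hks.2
  have hite : ∀ (k : ℕ) (c : Prop) (_ : Decidable c),
      ((muProd lam1 k : ℝ) : ℂ) ^ (if c then (1:ℤ) else 0)
        = if c then ((muProd lam1 k : ℝ) : ℂ) else 1 := by
    intro k c hdec
    split <;> simp
  have step : ∀ k ∈ Finset.Icc 1 ℓ,
      ((muProd lam1 k : ℝ) : ℂ) ^ (-(cσ k : ℤ))
        = (((muProd lam1 k : ℝ) : ℂ) ^ (-(cτ k : ℤ))
            * (if k = a + b + 1 then ((muProd lam1 k : ℝ) : ℂ) else 1))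
          * ((if k = a then ((muProd lam1 k : ℝ) : ℂ) else 1)⁻¹
            * (if k = b then ((muProd lam1 k : ℝ) : ℂ) else 1)⁻¹) := by
    intro k hks
    have hμk := hμ k hks
    simp only [Finset.mem_Icc] at hks
    have hexp : -(cσ k : ℤ) = -(cτ k : ℤ)
        + (if k = a + b + 1 then (1:ℤ) else 0)
        - (if k = a then (1:ℤ) else 0) - (if k = b then (1:ℤ) else 0) := by
      have h := hk k hks.1 hks.2
      split_ifs at h ⊢ <;> push_cast <;> omega
    rw [hexp, zpow_sub₀ hμk, zpow_sub₀ hμk, zpow_add₀ hμk, hite, hite, hite]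
    split_ifs <;> field_simp <;> (try ring) <;> (try exact Or.inl trivial)
  rw [Finset.prod_congr rfl step, Finset.prod_mul_distrib, Finset.prod_mul_distrib,
    Finset.prod_mul_distrib, Finset.prod_inv_distrib, Finset.prod_inv_distrib,
    prod_ite_mu ℓ lam1 (a + b + 1) hmℓ, prod_ite_mu ℓ lam1 a (by omega),
    prod_ite_mu ℓ lam1 b (by omega)]
  ring

lemma diagO_ne_zero {ℓ N : ℕ} {lam1 : ℕ → ℝ} (hnz : ∀ j, 1 ≤ j → j ≤ ℓ → lam1 j ≠ 0)
    (σ : Config N) : diagO ℓ N lam1 σ ≠ 0 := by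
  unfold diagO
  rw [Finset.prod_ne_zero_iff]
  intro k hks
  simp only [Finset.mem_Icc] at hks
  exact zpow_ne_zero _ (by simpa using muProd_ne_zero hnz hks.2)

lemma open_entry {N ℓ c₁ cN : ℕ} (lam1 : ℕ → ℝ) (hnz : ∀ j, 1 ≤ j → j ≤ ℓ → lam1 j ≠ 0)
    (σ τ : Config N) (hτOK : OpenOK N ℓ c₁ cN τ) (i : Fin N)
    (hσi : σ i = false) (hτeq : τ = Function.update σ i true) :
    diagO ℓ N lam1 τ * AmpO (lamGen lam1) σ i * (diagO ℓ N lam1 σ)⁻¹ = 1 := by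
  subst hτeq
  obtain ⟨hF2, hF1, -, -⟩ := lrunO_facts σ i
  obtain ⟨hF4, -⟩ := rrunO_facts σ i
  set a := lrunO σ i with ha
  set b := rrunO σ i with hb
  have hiN := i.isLt
  have hup := extc_update σ i
  have hmℓ : a + b + 1 ≤ ℓ := by
    by_contra hgt
    apply hτOK.1 (i.1 - a)
    intro t htℓ
    have htm : t < a + b + 1 := by omega
    rcases Nat.lt_trichotomy (i.1 - a + t) i.1 with h' | h' | h'
    · rw [hup, if_neg (by omega), show i.1 - a + t = i.1 - (a - t) from by omega]
      exact hF1 (a - t) (by omega) (by omega)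
    · rw [hup, if_pos h']
    · rw [hup, if_neg (by omega), show i.1 - a + t = i.1 + (i.1 - a + t - i.1) from by omega]
      exact hF4 (i.1 - a + t - i.1) (by omega) (by omega)
  have hratio := diag_ratio ℓ lam1 hnz (clustO N σ) (clustO N (Function.update σ i true))
    a b hmℓ (fun k h1 _ => clustO_update σ i hσi k h1)
  have hXne : diagO ℓ N lam1 (Function.update σ i true) ≠ 0 := diagO_ne_zero hnz _
  have hμm := muProd_ne_zero hnz hmℓ
  have hμa : muProd lam1 a ≠ 0 := muProd_ne_zero hnz (by omega)
  have hμb : muProd lam1 b ≠ 0 := muProd_ne_zero hnz (by omega)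
  have hAmp : AmpO (lamGen lam1) σ i
      = ((muProd lam1 (a + b + 1) : ℝ) : ℂ)
        * ((muProd lam1 a : ℝ) : ℂ)⁻¹ * ((muProd lam1 b : ℝ) : ℂ)⁻¹ := by
    unfold AmpO lamGen
    rw [show a + 1 - 1 = a from by omega, show a + b + 1 - (a + 1) = b from by omega]
    push_cast
    field_simp
    rfl
  have hdσ : diagO ℓ N lam1 σ
      = diagO ℓ N lam1 (Function.update σ i true)
        * ((muProd lam1 (a + b + 1) : ℝ) : ℂ)
        * ((muProd lam1 a : ℝ) : ℂ)⁻¹ * ((muProd lam1 b : ℝ) : ℂ)⁻¹ := hratio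
  rw [hdσ, hAmp]
  have hμm' : ((muProd lam1 (a + b + 1) : ℝ) : ℂ) ≠ 0 := by simpa using hμm
  have hμa' : ((muProd lam1 a : ℝ) : ℂ) ≠ 0 := by simpa using hμa
  have hμb' : ((muProd lam1 b : ℝ) : ℂ) ≠ 0 := by simpa using hμb
  field_simp

end DiagRatio
section Transfer

lemma conj_eq {N : ℕ} (OK : Config N → Prop) (Amp : Config N → Fin N → ℂ)
    (d : {σ : Config N // OK σ} → ℂ)
    (h : ∀ (σ τ : {σ : Config N // OK σ}) (i : Fin N), σ.1 i = false →
      τ.1 = Function.update σ.1 i true → d τ * Amp σ.1 i * (d σ)⁻¹ = 1) :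
    Matrix.diagonal d * QmatA N OK (fun _ => True) Amp
        * Matrix.diagonal (fun σ => (d σ)⁻¹)
      = QmatA N OK (fun _ => True) (fun _ _ => 1) := by
  ext τ σ
  rw [Matrix.mul_diagonal, Matrix.diagonal_mul]
  unfold QmatA
  rw [Finset.mul_sum, Finset.sum_mul]
  apply Finset.sum_congr rfl
  intro i _
  by_cases hc : True ∧ σ.1 i = false ∧ τ.1 = Function.update σ.1 i true
  · rw [if_pos hc, if_pos hc]
    have hkey := h σ τ i hc.2.1 hc.2.2
    have hgoal : d τ * (Amp σ.1 i * sgn σ.1 i) * (d σ)⁻¹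
        = (d τ * Amp σ.1 i * (d σ)⁻¹) * sgn σ.1 i := by ring
    rw [hgoal, hkey, one_mul]
  · rw [if_neg hc, if_neg hc, mul_zero, zero_mul]

lemma map_equiv_eq' {M M' : Type*} [AddCommGroup M] [Module ℂ M] [AddCommGroup M']
    [Module ℂ M'] (e : M ≃ₗ[ℂ] M') (p : Submodule ℂ M) (q : Submodule ℂ M')
    (h1 : ∀ x ∈ p, e x ∈ q) (h2 : ∀ x ∈ q, e.symm x ∈ p) :
    Submodule.map (e : M →ₗ[ℂ] M') p = q := by
  apply le_antisymm
  · rintro y ⟨x, hx, rfl⟩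
    exact h1 x hx
  · intro y hy
    exact ⟨e.symm y, h2 y hy, e.apply_symm_apply y⟩

lemma mem_gradeV {N : ℕ} {OK : Config N → Prop} {f : ℕ} (ψ : AState N OK) :
    ψ ∈ gradeV N OK f ↔ ∀ σ, fermions σ.1 ≠ f → ψ σ = 0 := Iff.rfl

lemma coh_transfer {N : ℕ} (OK : Config N → Prop) (Amp : Config N → Fin N → ℂ)
    (d : {σ : Config N // OK σ} → ℂ) (hd : ∀ x, d x ≠ 0)
    (heq : Matrix.diagonal d * QmatA N OK (fun _ => True) Amp
        * Matrix.diagonal (fun σ => (d σ)⁻¹)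
      = QmatA N OK (fun _ => True) (fun _ _ => 1)) (f : ℕ) :
    cohDimA N OK Amp f = cohDimA N OK (fun _ _ => 1) f := by
  classical
  set dinv : {σ : Config N // OK σ} → ℂ := fun σ => (d σ)⁻¹ with hdinv
  have hinv1 : Matrix.diagonal d * Matrix.diagonal dinv = 1 := by
    rw [Matrix.diagonal_mul_diagonal]
    have hfun : (fun i => d i * dinv i) = fun _ => (1 : ℂ) := by
      funext x; exact mul_inv_cancel₀ (hd x)
    rw [hfun, Matrix.diagonal_one]
  have hinv2 : Matrix.diagonal dinv * Matrix.diagonal d = 1 := by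
    rw [Matrix.diagonal_mul_diagonal]
    have hfun : (fun i => dinv i * d i) = fun _ => (1 : ℂ) := by
      funext x; exact inv_mul_cancel₀ (hd x)
    rw [hfun, Matrix.diagonal_one]
  set e : AState N OK ≃ₗ[ℂ] AState N OK := LinearEquiv.ofLinear
    (Matrix.diagonal d).mulVecLin (Matrix.diagonal dinv).mulVecLin
    (by rw [← Matrix.mulVecLin_mul, hinv1, Matrix.mulVecLin_one])
    (by rw [← Matrix.mulVecLin_mul, hinv2, Matrix.mulVecLin_one]) with he
  have he_apply : ∀ (ψ : AState N OK) (x), e ψ x = d x * ψ x := by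
    intro ψ x
    show (Matrix.diagonal d).mulVec ψ x = d x * ψ x
    rw [Matrix.mulVec_diagonal]
  have he_symm_apply : ∀ (ψ : AState N OK) (x), e.symm ψ x = (d x)⁻¹ * ψ x := by
    intro ψ x
    show (Matrix.diagonal dinv).mulVec ψ x = (d x)⁻¹ * ψ x
    rw [Matrix.mulVec_diagonal]
  have hcommM : Matrix.diagonal d * QmatA N OK (fun _ => True) Amp
      = QmatA N OK (fun _ => True) (fun _ _ => 1) * Matrix.diagonal d := by
    have h2 := congrArg (fun M => M * Matrix.diagonal d) heq
    simp only at h2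
    rw [Matrix.mul_assoc (Matrix.diagonal d * QmatA N OK (fun _ => True) Amp),
      hinv2, Matrix.mul_one] at h2
    exact h2
  have hcomm : e.toLinearMap ∘ₗ QopA N OK (fun _ => True) Amp
      = QopA N OK (fun _ => True) (fun _ _ => 1) ∘ₗ e.toLinearMap := by
    show (Matrix.diagonal d).mulVecLin ∘ₗ (QmatA N OK (fun _ => True) Amp).mulVecLin
      = (QmatA N OK (fun _ => True) (fun _ _ => 1)).mulVecLin
          ∘ₗ (Matrix.diagonal d).mulVecLin
    rw [← Matrix.mulVecLin_mul, ← Matrix.mulVecLin_mul, hcommM]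
  have hcomm' : ∀ ψ, e (QopA N OK (fun _ => True) Amp ψ)
      = QopA N OK (fun _ => True) (fun _ _ => 1) (e ψ) :=
    fun ψ => LinearMap.congr_fun hcomm ψ
  have hcomm'' : ∀ ψ, e.symm (QopA N OK (fun _ => True) (fun _ _ => 1) ψ)
      = QopA N OK (fun _ => True) Amp (e.symm ψ) := by
    intro ψ
    apply e.injective
    rw [e.apply_symm_apply, hcomm', e.apply_symm_apply]
  have hgrmem : ∀ (x : AState N OK) (g), x ∈ gradeV N OK g → e x ∈ gradeV N OK g := by
    intro x g hx
    rw [mem_gradeV] at hx ⊢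
    intro σ hσ
    rw [he_apply, hx σ hσ, mul_zero]
  have hgrmem' : ∀ (x : AState N OK) (g), x ∈ gradeV N OK g → e.symm x ∈ gradeV N OK g := by
    intro x g hx
    rw [mem_gradeV] at hx ⊢
    intro σ hσ
    rw [he_symm_apply, hx σ hσ, mul_zero]
  have hcocyc : Submodule.map (e : AState N OK →ₗ[ℂ] AState N OK)
      (cocyclesA N OK Amp f) = cocyclesA N OK (fun _ _ => 1) f := by
    apply map_equiv_eq'
    · intro x hx
      rw [cocyclesA, Submodule.mem_inf] at hx ⊢
      refine ⟨?_, hgrmem x f hx.2⟩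
      rw [LinearMap.mem_ker] at hx ⊢
      rw [← hcomm', hx.1, map_zero]
    · intro x hx
      rw [cocyclesA, Submodule.mem_inf] at hx ⊢
      refine ⟨?_, hgrmem' x f hx.2⟩
      rw [LinearMap.mem_ker] at hx ⊢
      apply e.injective
      rw [hcomm', e.apply_symm_apply, hx.1, map_zero]
  have hcob : Submodule.map (e : AState N OK →ₗ[ℂ] AState N OK)
      (coboundsA N OK Amp f) = coboundsA N OK (fun _ _ => 1) f := by
    apply map_equiv_eq'
    · intro x hx
      obtain ⟨y, hy, rfl⟩ := Submodule.mem_map.mp hx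
      rw [show ((QopA N OK (fun _ => True) Amp) y : AState N OK)
          = QopA N OK (fun _ => True) Amp y from rfl, hcomm' y]
      exact Submodule.mem_map_of_mem (hgrmem y (f - 1) hy)
    · intro x hx
      obtain ⟨y, hy, rfl⟩ := Submodule.mem_map.mp hx
      rw [show ((QopA N OK (fun _ => True) (fun _ _ => 1)) y : AState N OK)
          = QopA N OK (fun _ => True) (fun _ _ => 1) y from rfl, hcomm'' y]
      exact Submodule.mem_map_of_mem (hgrmem' y (f - 1) hy)
  set Z := cocyclesA N OK Amp f with hZ
  set Z' := cocyclesA N OK (fun _ _ => 1) f with hZ'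
  set e1 : Z ≃ₗ[ℂ] Z' :=
    (e.submoduleMap Z).trans (LinearEquiv.ofEq _ _ hcocyc) with he1
  have he1_coe : ∀ z : Z, ((e1 z : Z') : AState N OK) = e (z : AState N OK) := by
    intro z; rfl
  have hmapB : Submodule.map (e1 : Z →ₗ[ℂ] Z')
      ((coboundsA N OK Amp f).comap Z.subtype)
      = (coboundsA N OK (fun _ _ => 1) f).comap Z'.subtype := by
    apply map_equiv_eq'
    · intro z hz
      rw [Submodule.mem_comap] at hz ⊢
      rw [show (Z'.subtype (e1 z) : AState N OK) = e (z : AState N OK) from he1_coe z]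
      rw [← hcob]
      exact Submodule.mem_map_of_mem hz
    · intro z' hz'
      rw [Submodule.mem_comap] at hz' ⊢
      have hz'' : (z' : AState N OK)
          ∈ Submodule.map (e : AState N OK →ₗ[ℂ] AState N OK) (coboundsA N OK Amp f) := by
        rw [hcob]; exact hz'
      obtain ⟨w, hw, hwe⟩ := Submodule.mem_map.mp hz''
      have hcoe : (e1.symm z' : AState N OK) = w := by
        apply e.injective
        have h3 := he1_coe (e1.symm z')
        rw [e1.apply_symm_apply] at h3
        rw [← h3]
        exact hwe.symm
      rw [show (Z.subtype (e1.symm z') : AState N OK)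
          = (e1.symm z' : AState N OK) from rfl, hcoe]
      exact hw
  have hquot := Submodule.Quotient.equiv
    ((coboundsA N OK Amp f).comap Z.subtype)
    ((coboundsA N OK (fun _ _ => 1) f).comap Z'.subtype) e1 hmapB
  exact LinearEquiv.finrank_eq hquot

end Transfer
section Periodic

open Finset

lemma cyc_cyc {N : ℕ} (i : Fin N) (d t : ℕ) : cyc (cyc i d) t = cyc i (d + t) := by
  apply Fin.ext
  show ((i.1 + d) % N + t) % N = (i.1 + (d + t)) % N
  rw [Nat.mod_add_mod, Nat.add_assoc]

lemma cyc_addN {N : ℕ} (i : Fin N) (s : ℕ) : cyc i (s + N) = cyc i s := by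
  apply Fin.ext
  show (i.1 + (s + N)) % N = (i.1 + s) % N
  rw [← Nat.add_assoc, Nat.add_mod_right]

lemma cyc_mod {N : ℕ} (i : Fin N) (s : ℕ) : cyc i (s % N) = cyc i s := by
  apply Fin.ext
  show (i.1 + s % N) % N = (i.1 + s) % N
  rw [Nat.add_mod_mod]

lemma cyc_zero {N : ℕ} (i : Fin N) : cyc i 0 = i := by
  apply Fin.ext
  show (i.1 + 0) % N = i.1
  rw [Nat.add_zero, Nat.mod_eq_of_lt i.isLt]

lemma cyc_inj {N : ℕ} (i : Fin N) {d1 d2 : ℕ} (h1 : d1 < N) (h2 : d2 < N)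
    (h : cyc i d1 = cyc i d2) : d1 = d2 := by
  have hv : (i.1 + d1) % N = (i.1 + d2) % N := congrArg Fin.val h
  have hmod : d1 % N = d2 % N := Nat.ModEq.add_left_cancel' i.1 hv
  rwa [Nat.mod_eq_of_lt h1, Nat.mod_eq_of_lt h2] at hmod

lemma cyc_eq_self_iff {N : ℕ} (i : Fin N) (s : ℕ) : cyc i s = i ↔ s % N = 0 := by
  constructor
  · intro h
    rw [← cyc_mod] at h
    have h0 : cyc i 0 = i := cyc_zero i
    exact cyc_inj i (Nat.mod_lt _ i.pos) i.pos (h.trans h0.symm)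
  · intro h
    rw [← cyc_mod, h, cyc_zero]

lemma cyc_surj_inv {N : ℕ} (i j : Fin N) :
    (N - i.1 + j.1) % N < N ∧ cyc i ((N - i.1 + j.1) % N) = j := by
  refine ⟨Nat.mod_lt _ i.pos, ?_⟩
  apply Fin.ext
  show (i.1 + (N - i.1 + j.1) % N) % N = j.1
  rw [Nat.add_mod_mod]
  have hi := i.isLt
  rw [show i.1 + (N - i.1 + j.1) = N + j.1 from by omega]
  rw [Nat.add_mod_left, Nat.mod_eq_of_lt j.isLt]

lemma clustP_reindex {N : ℕ} (σ : Config N) (i : Fin N) (k : ℕ) :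
    clustP N σ k = ((Finset.range N).filter fun d =>
      σ (cyc i (d + (N - 1))) = false ∧ (∀ t < k, σ (cyc i (d + t)) = true) ∧
        σ (cyc i (d + k)) = false).card := by
  unfold clustP
  apply Finset.card_bij' (i := fun (j : Fin N) _ => (N - i.1 + j.1) % N)
    (j := fun d _ => cyc i d)
  · intro j hj
    obtain ⟨hlt, hcy⟩ := cyc_surj_inv i j
    simp only [Finset.mem_filter, Finset.mem_univ, true_and] at hj
    simp only [Finset.mem_filter, Finset.mem_range]
    refine ⟨hlt, ?_, ?_, ?_⟩
    · rw [← cyc_cyc, hcy]; exact hj.1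
    · intro t ht; rw [← cyc_cyc, hcy]; exact hj.2.1 t ht
    · rw [← cyc_cyc, hcy]; exact hj.2.2
  · intro d hd
    simp only [Finset.mem_filter, Finset.mem_range] at hd
    simp only [Finset.mem_filter, Finset.mem_univ, true_and]
    refine ⟨?_, ?_, ?_⟩
    · rw [cyc_cyc]; exact hd.2.1
    · intro t ht; rw [cyc_cyc]; exact hd.2.2.1 t ht
    · rw [cyc_cyc]; exact hd.2.2.2
  · intro j hj
    exact (cyc_surj_inv i j).2
  · intro d hd
    simp only [Finset.mem_filter, Finset.mem_range] at hd
    have hlt := hd.1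
    have hi := i.isLt
    show (N - i.1 + (cyc i d).1) % N = d
    rw [show (cyc i d).1 = (i.1 + d) % N from rfl, Nat.add_mod_mod,
      show N - i.1 + (i.1 + d) = N + d from by omega, Nat.add_mod_left,
      Nat.mod_eq_of_lt hlt]

lemma lrunP_key {N : ℕ} (σ : Config N) (i : Fin N) (r : ℕ) :
    (1 ≤ r ∧ r < N ∧ ∀ k, 1 ≤ k → k ≤ r → σ (cyc i (N - k)) = true) ↔
      (1 ≤ r ∧ r ≤ lrunP σ i) := by
  have hA : ((Finset.range N).filter fun r =>
      1 ≤ r ∧ ∀ k, 1 ≤ k → k ≤ r → σ (cyc i (N - k)) = true)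
      = Finset.Icc 1 (lrunP σ i) := by
    apply aux_dc_eq_Icc
    · simp
    · intro r hr r' h1 h2
      simp only [Finset.mem_filter, Finset.mem_range] at hr ⊢
      obtain ⟨hrN, _, hocc⟩ := hr
      exact ⟨lt_of_le_of_lt h2 hrN, h1, fun k hk1 hk2 => hocc k hk1 (le_trans hk2 h2)⟩
  constructor
  · rintro ⟨h1, h2, h3⟩
    have hmem : r ∈ Finset.Icc 1 (lrunP σ i) := by
      rw [← hA]
      simp only [Finset.mem_filter, Finset.mem_range]
      exact ⟨h2, h1, h3⟩
    simpa using hmem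
  · rintro ⟨h1, h2⟩
    have hmem : r ∈ ((Finset.range N).filter fun r =>
        1 ≤ r ∧ ∀ k, 1 ≤ k → k ≤ r → σ (cyc i (N - k)) = true) := by
      rw [hA]; simp [h1, h2]
    simp only [Finset.mem_filter, Finset.mem_range] at hmem
    exact ⟨h1, hmem.1, hmem.2.2⟩

lemma rrunP_key {N : ℕ} (σ : Config N) (i : Fin N) (r : ℕ) :
    (1 ≤ r ∧ r < N ∧ ∀ k, 1 ≤ k → k ≤ r → σ (cyc i k) = true) ↔
      (1 ≤ r ∧ r ≤ rrunP σ i) := by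
  have hA : ((Finset.range N).filter fun r =>
      1 ≤ r ∧ ∀ k, 1 ≤ k → k ≤ r → σ (cyc i k) = true)
      = Finset.Icc 1 (rrunP σ i) := by
    apply aux_dc_eq_Icc
    · simp
    · intro r hr r' h1 h2
      simp only [Finset.mem_filter, Finset.mem_range] at hr ⊢
      obtain ⟨hrN, _, hocc⟩ := hr
      exact ⟨lt_of_le_of_lt h2 hrN, h1, fun k hk1 hk2 => hocc k hk1 (le_trans hk2 h2)⟩
  constructor
  · rintro ⟨h1, h2, h3⟩
    have hmem : r ∈ Finset.Icc 1 (rrunP σ i) := by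
      rw [← hA]
      simp only [Finset.mem_filter, Finset.mem_range]
      exact ⟨h2, h1, h3⟩
    simpa using hmem
  · rintro ⟨h1, h2⟩
    have hmem : r ∈ ((Finset.range N).filter fun r =>
        1 ≤ r ∧ ∀ k, 1 ≤ k → k ≤ r → σ (cyc i k) = true) := by
      rw [hA]; simp [h1, h2]
    simp only [Finset.mem_filter, Finset.mem_range] at hmem
    exact ⟨h1, hmem.1, hmem.2.2⟩

end Periodic
section PeriodicCore

open Finset

lemma periodic_core (N a b k : ℕ) (y y' : ℕ → Bool)
    (hN : 2 ≤ N) (hab : a + b ≤ N - 2) (hk1 : 1 ≤ k)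
    (hy0 : y 0 = false) (hper : ∀ s, y (s + N) = y s)
    (hy' : ∀ s, y' s = if s % N = 0 then true else y s)
    (hL1 : ∀ j, 1 ≤ j → j ≤ a → y (N - j) = true)
    (hL1' : ∀ r, r < N → (∀ j, 1 ≤ j → j ≤ r → y (N - j) = true) → r ≤ a)
    (hL3 : y (N - a - 1) = false)
    (hR1 : ∀ j, 1 ≤ j → j ≤ b → y j = true)
    (hR5 : y (b + 1) = false) :
    ((Finset.range N).filter fun d =>
        y (d + (N - 1)) = false ∧ (∀ t < k, y (d + t) = true) ∧ y (d + k) = false).card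
      + (if k = a + b + 1 then 1 else 0)
    = ((Finset.range N).filter fun d =>
        y' (d + (N - 1)) = false ∧ (∀ t < k, y' (d + t) = true) ∧ y' (d + k) = false).card
      + (if k = a then 1 else 0) + (if k = b then 1 else 0) := by
  have hyN : y N = false := by
    have := hper 0
    rw [Nat.zero_add] at this
    rw [this, hy0]
  set Py := fun d => y (d + (N - 1)) = false ∧ (∀ t < k, y (d + t) = true) ∧
      y (d + k) = false with hPy
  set Py' := fun d => y' (d + (N - 1)) = false ∧ (∀ t < k, y' (d + t) = true) ∧
      y' (d + k) = false with hPy'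
  rcases Nat.lt_or_ge k N with hkN | hkN
  swap
  · -- k ≥ N : both sides vanish
    have hempty : ∀ (z : ℕ → Bool) (d : ℕ), ¬ (z (d + (N - 1)) = false ∧
        (∀ t < k, z (d + t) = true) ∧ z (d + k) = false) := by
      rintro z d ⟨h1, h2, h3⟩
      have := h2 (N - 1) (by omega)
      rw [this] at h1; simp at h1
    have he1 : ((Finset.range N).filter Py) = ∅ := by
      apply Finset.filter_false_of_mem
      intro d _
      exact hempty y d
    have he2 : ((Finset.range N).filter Py') = ∅ := by
      apply Finset.filter_false_of_mem
      intro d _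
      exact hempty y' d
    rw [he1, he2]
    rw [if_neg (by omega), if_neg (by omega), if_neg (by omega)]
  -- main case : k < N
  set Ld := if a = 0 then 0 else N - a with hLd
  have hLdN : Ld < N := by
    rw [hLd]; split <;> omega
  have hLd1 : Ld ≠ 1 := by
    rw [hLd]; split <;> omega
  -- occupation of the merged cluster in y'
  have hocc' : ∀ t, t < a + b + 1 → y' (Ld + t) = true := by
    intro t ht
    rcases Nat.eq_zero_or_pos a with ha0 | ha1
    · rw [hLd, if_pos ha0, Nat.zero_add, hy']
      rcases Nat.eq_zero_or_pos t with ht0 | ht1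
      · rw [ht0]; simp
      · rw [if_neg (by rw [Nat.mod_eq_of_lt (by omega)]; omega)]
        exact hR1 t ht1 (by omega)
    · rw [hLd, if_neg (by omega), hy']
      rcases Nat.lt_trichotomy t a with h' | h' | h'
      · rw [if_neg (by rw [Nat.mod_eq_of_lt (by omega)]; omega)]
        rw [show N - a + t = N - (a - t) from by omega]
        exact hL1 (a - t) (by omega) (by omega)
      · rw [h', show N - a + a = N from by omega]
        simp [Nat.mod_self]
      · rw [show N - a + t = (t - a) + N from by omega]
        rw [if_neg (by rw [Nat.add_mod_right, Nat.mod_eq_of_lt (by omega)]; omega)]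
        rw [hper]
        exact hR1 (t - a) (by omega) (by omega)
  have hend : y' (Ld + (a + b + 1)) = false := by
    rcases Nat.eq_zero_or_pos a with ha0 | ha1
    · rw [hLd, if_pos ha0, Nat.zero_add, hy']
      rw [if_neg (by rw [Nat.mod_eq_of_lt (by omega)]; omega)]
      rw [ha0, Nat.zero_add]
      exact hR5
    · rw [hLd, if_neg (by omega), hy']
      rw [show N - a + (a + b + 1) = (b + 1) + N from by omega]
      rw [if_neg (by rw [Nat.add_mod_right, Nat.mod_eq_of_lt (by omega)]; omega)]
      rw [hper]
      exact hR5
  have hpre : y' (Ld + (N - 1)) = false := by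
    rcases Nat.eq_zero_or_pos a with ha0 | ha1
    · rw [hLd, if_pos ha0, Nat.zero_add, hy']
      rw [if_neg (by rw [Nat.mod_eq_of_lt (by omega)]; omega)]
      have := hL3
      rw [ha0] at this
      rw [show N - 1 = N - 0 - 1 from by omega]
      exact this
    · rw [hLd, if_neg (by omega), hy']
      rw [show N - a + (N - 1) = (N - a - 1) + N from by omega]
      rw [if_neg (by rw [Nat.add_mod_right, Nat.mod_eq_of_lt (by omega)]; omega)]
      rw [hper]
      exact hL3
  -- Claim B
  have claimB : Py Ld ↔ k = a := by
    rcases Nat.eq_zero_or_pos a with ha0 | ha1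
    · constructor
      · rintro ⟨-, h2, -⟩
        have h0 := h2 0 (by omega)
        rw [hLd, if_pos ha0] at h0
        norm_num at h0
        rw [hy0] at h0
        simp at h0
      · intro h; omega
    · rw [hLd, if_neg (by omega)]
      constructor
      · rintro ⟨h1, h2, h3⟩
        by_contra hka
        rcases Nat.lt_or_ge k a with h' | h'
        · rw [show N - a + k = N - (a - k) from by omega] at h3
          rw [hL1 (a - k) (by omega) (by omega)] at h3
          simp at h3
        · have hocc := h2 a (by omega)
          rw [show N - a + a = N from by omega, hyN] at hocc
          simp at hocc
      · rintro rfl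
        refine ⟨?_, ?_, ?_⟩
        · rw [show N - k + (N - 1) = (N - k - 1) + N from by omega, hper]
          exact hL3
        · intro t ht
          rw [show N - k + t = N - (k - t) from by omega]
          exact hL1 (k - t) (by omega) (by omega)
        · rw [show N - k + k = N from by omega]
          exact hyN
  -- Claim C
  have claimC : Py' Ld ↔ k = a + b + 1 := by
    constructor
    · rintro ⟨h1, h2, h3⟩
      by_contra hkm
      rcases Nat.lt_or_ge k (a + b + 1) with h' | h'
      · rw [hocc' k h'] at h3; simp at h3
      · have hocc := h2 (a + b + 1) (by omega)
        rw [hend] at hocc; simp at hocc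
    · rintro rfl
      exact ⟨hpre, fun t ht => hocc' t ht, hend⟩
  -- Claim D
  have claimD : Py 1 ↔ k = b := by
    constructor
    · rintro ⟨h1, h2, h3⟩
      by_contra hkb
      rcases Nat.lt_or_ge k b with h' | h'
      · rw [show 1 + k = k + 1 from by omega] at h3
        rw [hR1 (k + 1) (by omega) (by omega)] at h3
        simp at h3
      · have hocc := h2 b (by omega)
        rw [show 1 + b = b + 1 from by omega, hR5] at hocc
        simp at hocc
    · rintro rfl
      refine ⟨?_, ?_, ?_⟩
      · rw [show 1 + (N - 1) = N from by omega]
        exact hyN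
      · intro t ht
        rw [show 1 + t = t + 1 from by omega]
        exact hR1 (t + 1) (by omega) (by omega)
      · rw [show 1 + k = k + 1 from by omega]
        exact hR5
  -- Claim E
  have claimE : ¬ Py' 1 := by
    rintro ⟨h1, -, -⟩
    rw [hy', show 1 + (N - 1) = N from by omega, if_pos (Nat.mod_self N)] at h1
    simp at h1
  -- Claim A
  have claimA : ∀ d, d < N → d ≠ Ld → d ≠ 1 → (Py d ↔ Py' d) := by
    intro d hdN hdLd hd1
    have htrue : ∀ s, y s = true → y' s = true := by
      intro s hs
      rw [hy']
      split
      · rfl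
      · exact hs
    have hfalse : ∀ s, y' s = false → y s = false := by
      intro s hs
      rw [hy'] at hs
      split at hs
      · exact absurd hs (by simp)
      · exact hs
    constructor
    · rintro ⟨h1, h2, h3⟩
      have hdk : d + k ≠ N := by
        intro he
        have hd0 : 1 ≤ d := by omega
        have hka : k ≤ a := by
          apply hL1' k (by omega)
          intro j hj1 hj2
          rw [show N - j = d + (k - j) from by omega]
          exact h2 (k - j) (by omega)
        have hkea : k = a := by
          by_contra hne'
          have hklt : k < a := by omega
          have hd2 : 2 ≤ d := by omega
          have ht : y (d + (N - 1)) = true := by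
            rw [show d + (N - 1) = (N - (k + 1)) + N from by omega, hper]
            exact hL1 (k + 1) (by omega) (by omega)
          rw [ht] at h1; simp at h1
        apply hdLd
        rw [hLd, if_neg (by omega)]
        omega
      refine ⟨?_, fun t ht => htrue _ (h2 t ht), ?_⟩
      · have hcond : (d + (N - 1)) % N ≠ 0 := by
          rcases Nat.eq_zero_or_pos d with h0 | h0
          · rw [h0, Nat.zero_add, Nat.mod_eq_of_lt (by omega)]
            omega
          · rw [show d + (N - 1) = (d - 1) + N from by omega, Nat.add_mod_right,
              Nat.mod_eq_of_lt (by omega)]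
            omega
        rw [hy', if_neg hcond]
        exact h1
      · have hcond : (d + k) % N ≠ 0 := by
          rcases Nat.lt_or_ge (d + k) N with h' | h'
          · rw [Nat.mod_eq_of_lt h']
            omega
          · rw [show d + k = (d + k - N) + N from by omega, Nat.add_mod_right,
              Nat.mod_eq_of_lt (by omega)]
            omega
        rw [hy', if_neg hcond]
        exact h3
    · rintro ⟨h1, h2, h3⟩
      have hnt : ∀ t, t < k → d + t ≠ N := by
        intro t ht he
        have hd0 : 1 ≤ d := by omega
        have hd2 : 2 ≤ d := by omega
        have hta : t ≤ a := by
          apply hL1' t (by omega)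
          intro j hj1 hj2
          have := h2 (t - j) (by omega)
          rw [hy', if_neg (by rw [Nat.mod_eq_of_lt (by omega)]; omega)] at this
          rw [show N - j = d + (t - j) from by omega]
          exact this
        have htea : t = a := by
          by_contra hne'
          have htlt : t < a := by omega
          have hocc : y (d + (N - 1)) = true := by
            rw [show d + (N - 1) = (N - (t + 1)) + N from by omega, hper]
            exact hL1 (t + 1) (by omega) (by omega)
          have := hfalse _ h1
          rw [hocc] at this; simp at this
        apply hdLd
        rw [hLd, if_neg (by omega)]
        omega
      have hd00 : ¬ (d = 0 ∧ a ≥ 1) := by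
        rintro ⟨hd0, ha1⟩
        have hocc : y (d + (N - 1)) = true := by
          rw [hd0, Nat.zero_add]
          exact hL1 1 le_rfl ha1
        have := hfalse _ h1
        rw [hocc] at this; simp at this
      refine ⟨hfalse _ h1, ?_, hfalse _ h3⟩
      intro t ht
      have := h2 t ht
      rw [hy'] at this
      split at this
      · exfalso
        rename_i hsplit
        rcases Nat.lt_or_ge (d + t) N with h' | h'
        · rw [Nat.mod_eq_of_lt h'] at hsplit
          -- d + t = 0 : d = 0, t = 0
          have hd0 : d = 0 := by omega
          have ha0 : a = 0 := by
            by_contra ha1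
            exact hd00 ⟨hd0, by omega⟩
          apply hdLd
          rw [hLd, if_pos ha0, hd0]
        · -- d + t = N
          have : d + t = N := by
            rcases Nat.lt_or_ge (d + t) (2 * N) with h'' | h''
            · rw [show d + t = (d + t - N) + N from by omega, Nat.add_mod_right,
                Nat.mod_eq_of_lt (by omega)] at hsplit
              omega
            · omega
          exact hnt t ht this
      · exact this
  -- counting
  have hmem1 : (Ld ∈ (Finset.range N).filter Py) ↔ k = a := by
    simp only [Finset.mem_filter, Finset.mem_range]
    constructor
    · intro h; exact claimB.1 h.2
    · intro h; exact ⟨hLdN, claimB.2 h⟩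
  have hmem2 : (Ld ∈ (Finset.range N).filter Py') ↔ k = a + b + 1 := by
    simp only [Finset.mem_filter, Finset.mem_range]
    constructor
    · intro h; exact claimC.1 h.2
    · intro h; exact ⟨hLdN, claimC.2 h⟩
  have hmem3 : ((1 : ℕ) ∈ (Finset.range N).filter Py) ↔ k = b := by
    simp only [Finset.mem_filter, Finset.mem_range]
    constructor
    · intro h; exact claimD.1 h.2
    · intro h; exact ⟨by omega, claimD.2 h⟩
  have hmem4 : (1 : ℕ) ∉ (Finset.range N).filter Py' := by
    simp only [Finset.mem_filter, Finset.mem_range]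
    rintro ⟨-, h⟩
    exact claimE h
  have hsdiff : ((Finset.range N).filter Py) \ {Ld, 1}
      = ((Finset.range N).filter Py') \ {Ld, 1} := by
    ext d
    simp only [Finset.mem_sdiff, Finset.mem_filter, Finset.mem_range,
      Finset.mem_insert, Finset.mem_singleton, not_or]
    constructor
    · rintro ⟨⟨hdN, hPd⟩, hdLd, hd1⟩
      exact ⟨⟨hdN, (claimA d hdN hdLd hd1).1 hPd⟩, hdLd, hd1⟩
    · rintro ⟨⟨hdN, hPd⟩, hdLd, hd1⟩
      exact ⟨⟨hdN, (claimA d hdN hdLd hd1).2 hPd⟩, hdLd, hd1⟩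
  have e1 := aux_card_split ((Finset.range N).filter Py) Ld 1 hLd1
  have e2 := aux_card_split ((Finset.range N).filter Py') Ld 1 hLd1
  rw [hsdiff] at e1
  rw [if_congr hmem1 rfl rfl, if_congr hmem3 rfl rfl] at e1
  rw [if_congr hmem2 rfl rfl, if_neg hmem4] at e2
  rw [e1, e2]
  ring

end PeriodicCore
section PerEntry

open Finset

lemma diagP_ne_zero {ℓ N : ℕ} {lam1 : ℕ → ℝ} (hnz : ∀ j, 1 ≤ j → j ≤ ℓ → lam1 j ≠ 0)
    (σ : Config N) : diagP ℓ N lam1 σ ≠ 0 := by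
  unfold diagP
  rw [Finset.prod_ne_zero_iff]
  intro k hks
  simp only [Finset.mem_Icc] at hks
  exact zpow_ne_zero _ (by simpa using muProd_ne_zero hnz hks.2)

lemma per_entry {N ℓ : ℕ} (lam1 : ℕ → ℝ) (hnz : ∀ j, 1 ≤ j → j ≤ ℓ → lam1 j ≠ 0)
    (σ τ : Config N) (hτOK : PerOK N ℓ τ) (i : Fin N)
    (hσi : σ i = false) (hτeq : τ = Function.update σ i true) :
    diagP ℓ N lam1 τ * AmpP (lamGen lam1) σ i * (diagP ℓ N lam1 σ)⁻¹ = 1 := by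
  subst hτeq
  set y : ℕ → Bool := fun s => σ (cyc i s) with hy
  have hyfold : ∀ s, σ (cyc i s) = y s := fun _ => rfl
  set y' : ℕ → Bool := fun s => if s % N = 0 then true else y s with hy'def
  have hy'eq : ∀ s, y' s = if s % N = 0 then true else y s := fun _ => rfl
  have hyτ : ∀ s, Function.update σ i true (cyc i s) = y' s := by
    intro s
    rw [Function.update_apply]
    by_cases h : cyc i s = i
    · rw [if_pos h, hy'eq, if_pos ((cyc_eq_self_iff i s).1 h)]
    · rw [if_neg h, hy'eq, if_neg (fun hc => h ((cyc_eq_self_iff i s).2 hc))]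
  have hy0 : y 0 = false := by rw [← hyfold, cyc_zero]; exact hσi
  have hper : ∀ s, y (s + N) = y s := by
    intro s; rw [← hyfold, ← hyfold, cyc_addN]
  have hymod : ∀ s, y (s % N) = y s := by
    intro s; rw [← hyfold, ← hyfold, cyc_mod]
  have hyN : y N = false := by
    have h0 := hper 0
    rw [Nat.zero_add] at h0
    rw [h0, hy0]
  set a := lrunP σ i with ha
  set b := rrunP σ i with hb
  have keyL := lrunP_key σ i
  have keyR := rrunP_key σ i
  have hL1 : ∀ j, 1 ≤ j → j ≤ a → y (N - j) = true := by
    intro j h1 h2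
    obtain ⟨-, -, h⟩ := (keyL j).2 ⟨h1, h2⟩
    rw [← hyfold]
    exact h j h1 le_rfl
  have hL1' : ∀ r, r < N → (∀ j, 1 ≤ j → j ≤ r → y (N - j) = true) → r ≤ a := by
    intro r hr hocc
    rcases Nat.eq_zero_or_pos r with h0 | h0
    · omega
    · exact ((keyL r).1 ⟨h0, hr, fun j hj1 hj2 => (hyfold _) ▸ hocc j hj1 hj2⟩).2
  have hR1 : ∀ j, 1 ≤ j → j ≤ b → y j = true := by
    intro j h1 h2
    obtain ⟨-, -, h⟩ := (keyR j).2 ⟨h1, h2⟩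
    rw [← hyfold]
    exact h j h1 le_rfl
  have hR1' : ∀ r, r < N → (∀ j, 1 ≤ j → j ≤ r → y j = true) → r ≤ b := by
    intro r hr hocc
    rcases Nat.eq_zero_or_pos r with h0 | h0
    · omega
    · exact ((keyR r).1 ⟨h0, hr, fun j hj1 hj2 => (hyfold _) ▸ hocc j hj1 hj2⟩).2
  -- find an empty site of τ different from i
  obtain ⟨k₀, hk₀ℓ, hk₀⟩ := hτOK i
  rw [hyτ] at hk₀
  rw [hy'eq] at hk₀
  have hd₀ : 1 ≤ k₀ % N ∧ k₀ % N < N ∧ y (k₀ % N) = false := by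
    split at hk₀
    · exact absurd hk₀ (by simp)
    · refine ⟨by omega, Nat.mod_lt _ i.pos, ?_⟩
      rw [hymod]
      exact hk₀
  have hN2 : 2 ≤ N := by omega
  have hab : a + b ≤ N - 2 := by
    by_contra hcon
    have hall : ∀ s, 1 ≤ s → s < N → y s = true := by
      intro s h1 h2
      rcases Nat.lt_or_ge b s with h' | h'
      · rw [show s = N - (N - s) from by omega]
        exact hL1 (N - s) (by omega) (by omega)
      · exact hR1 s h1 h'
    have hc := hall (k₀ % N) hd₀.1 hd₀.2.1
    rw [hd₀.2.2] at hc; simp at hc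
  have hL3 : y (N - a - 1) = false := by
    by_contra hcon
    simp only [Bool.not_eq_false] at hcon
    have hook : ∀ j, 1 ≤ j → j ≤ a + 1 → y (N - j) = true := by
      intro j h1 h2
      rcases Nat.lt_or_ge j (a + 1) with h' | h'
      · exact hL1 j h1 (by omega)
      · rw [show j = a + 1 from by omega, show N - (a + 1) = N - a - 1 from by omega]
        exact hcon
    have := hL1' (a + 1) (by omega) hook
    omega
  have hR5 : y (b + 1) = false := by
    by_contra hcon
    simp only [Bool.not_eq_false] at hcon
    have hook : ∀ j, 1 ≤ j → j ≤ b + 1 → y j = true := by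
      intro j h1 h2
      rcases Nat.lt_or_ge j (b + 1) with h' | h'
      · exact hR1 j h1 (by omega)
      · rw [show j = b + 1 from by omega]
        exact hcon
    have := hR1' (b + 1) (by omega) hook
    omega
  set Ld := if a = 0 then 0 else N - a with hLd
  have hocc' : ∀ t, t < a + b + 1 → y' (Ld + t) = true := by
    intro t ht
    rcases Nat.eq_zero_or_pos a with ha0 | ha1
    · rw [hLd, if_pos ha0, Nat.zero_add, hy'eq]
      rcases Nat.eq_zero_or_pos t with ht0 | ht1
      · rw [ht0]; simp
      · rw [if_neg (by rw [Nat.mod_eq_of_lt (by omega)]; omega)]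
        exact hR1 t ht1 (by omega)
    · rw [hLd, if_neg (by omega), hy'eq]
      rcases Nat.lt_trichotomy t a with h' | h' | h'
      · rw [if_neg (by rw [Nat.mod_eq_of_lt (by omega)]; omega)]
        rw [show N - a + t = N - (a - t) from by omega]
        exact hL1 (a - t) (by omega) (by omega)
      · rw [h', show N - a + a = N from by omega]
        simp [Nat.mod_self]
      · rw [show N - a + t = (t - a) + N from by omega]
        rw [if_neg (by rw [Nat.add_mod_right, Nat.mod_eq_of_lt (by omega)]; omega)]
        rw [hper]
        exact hR1 (t - a) (by omega) (by omega)
  have hmℓ : a + b + 1 ≤ ℓ := by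
    by_contra hgt
    obtain ⟨k₁, hk₁ℓ, hk₁⟩ := hτOK (cyc i Ld)
    rw [cyc_cyc, hyτ] at hk₁
    rw [hocc' k₁ (by omega)] at hk₁
    simp at hk₁
  have hclust : ∀ k, 1 ≤ k → k ≤ ℓ →
      clustP N σ k + (if k = a + b + 1 then 1 else 0)
        = clustP N (Function.update σ i true) k
          + (if k = a then 1 else 0) + (if k = b then 1 else 0) := by
    intro k h1 _
    rw [clustP_reindex σ i k, clustP_reindex (Function.update σ i true) i k]
    simp only [hyτ, hyfold]
    exact periodic_core N a b k y y' hN2 hab h1 hy0 hper hy'eq hL1 hL1' hL3 hR1 hR5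
  have hratio := diag_ratio ℓ lam1 hnz (clustP N σ)
    (clustP N (Function.update σ i true)) a b hmℓ hclust
  have hXne : diagP ℓ N lam1 (Function.update σ i true) ≠ 0 := diagP_ne_zero hnz _
  have hμm := muProd_ne_zero hnz hmℓ
  have hμa : muProd lam1 a ≠ 0 := muProd_ne_zero hnz (by omega)
  have hμb : muProd lam1 b ≠ 0 := muProd_ne_zero hnz (by omega)
  have hAmp : AmpP (lamGen lam1) σ i
      = ((muProd lam1 (a + b + 1) : ℝ) : ℂ)
        * ((muProd lam1 a : ℝ) : ℂ)⁻¹ * ((muProd lam1 b : ℝ) : ℂ)⁻¹ := by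
    unfold AmpP lamGen
    rw [show a + 1 - 1 = a from by omega, show a + b + 1 - (a + 1) = b from by omega]
    push_cast
    field_simp
    rfl
  have hdσ : diagP ℓ N lam1 σ
      = diagP ℓ N lam1 (Function.update σ i true)
        * ((muProd lam1 (a + b + 1) : ℝ) : ℂ)
        * ((muProd lam1 a : ℝ) : ℂ)⁻¹ * ((muProd lam1 b : ℝ) : ℂ)⁻¹ := hratio
  rw [hdσ, hAmp]
  have hμm' : ((muProd lam1 (a + b + 1) : ℝ) : ℂ) ≠ 0 := by simpa using hμm
  have hμa' : ((muProd lam1 a : ℝ) : ℂ) ≠ 0 := by simpa using hμa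
  have hμb' : ((muProd lam1 b : ℝ) : ℂ) ≠ 0 := by simpa using hμb
  field_simp

end PerEntry
/-- Conjugating the supercharge `Q_λ` (with amplitudes `λ_{m,n} = μ_m/(μ_{n-1}μ_{m-n})`
built from nonzero `λ_{1,1}, …, λ_{ℓ,1}`) by the invertible diagonal map
`M e_σ = ∏_{k=1}^ℓ μ_k^{-m_k(σ)} e_σ` yields the unit-coupling supercharge `Q`:
`M Q_λ M⁻¹ = Q`, both for special and for periodic boundary conditions. In particular
the cohomology of `Q_λ` at each fermion number `f` has the same dimension as `H_Q^f`. -/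
theorem conjugation_to_unit_couplings (ℓ : ℕ) (hℓ : 1 ≤ ℓ) (lam1 : ℕ → ℝ)
    (hnz : ∀ j, 1 ≤ j → j ≤ ℓ → lam1 j ≠ 0) (N : ℕ) :
    (∀ c₁ cN, c₁ ≤ ℓ → cN ≤ ℓ →
      (∀ σ : {σ : Config N // OpenOK N ℓ c₁ cN σ}, diagO ℓ N lam1 σ.1 ≠ 0) ∧
      Matrix.diagonal (fun σ : {σ : Config N // OpenOK N ℓ c₁ cN σ} => diagO ℓ N lam1 σ.1) *
          QmatA N (OpenOK N ℓ c₁ cN) (fun _ => True) (AmpO (lamGen lam1)) *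
          Matrix.diagonal (fun σ : {σ : Config N // OpenOK N ℓ c₁ cN σ} =>
            (diagO ℓ N lam1 σ.1)⁻¹) =
        QmatA N (OpenOK N ℓ c₁ cN) (fun _ => True) (fun _ _ => 1) ∧
      ∀ f, cohDimA N (OpenOK N ℓ c₁ cN) (AmpO (lamGen lam1)) f =
        cohDimA N (OpenOK N ℓ c₁ cN) (fun _ _ => 1) f) ∧
    ((∀ σ : {σ : Config N // PerOK N ℓ σ}, diagP ℓ N lam1 σ.1 ≠ 0) ∧
      Matrix.diagonal (fun σ : {σ : Config N // PerOK N ℓ σ} => diagP ℓ N lam1 σ.1) *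
          QmatA N (PerOK N ℓ) (fun _ => True) (AmpP (lamGen lam1)) *
          Matrix.diagonal (fun σ : {σ : Config N // PerOK N ℓ σ} =>
            (diagP ℓ N lam1 σ.1)⁻¹) =
        QmatA N (PerOK N ℓ) (fun _ => True) (fun _ _ => 1) ∧
      ∀ f, cohDimA N (PerOK N ℓ) (AmpP (lamGen lam1)) f =
        cohDimA N (PerOK N ℓ) (fun _ _ => 1) f) := by
  refine ⟨?_, ?_⟩
  · intro c₁ cN hc₁ hcN
    refine ⟨fun σ => diagO_ne_zero hnz σ.1, ?_, ?_⟩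
    · exact conj_eq (OpenOK N ℓ c₁ cN) (AmpO (lamGen lam1))
        (fun σ => diagO ℓ N lam1 σ.1)
        (fun σ τ i hσi hτeq => open_entry lam1 hnz σ.1 τ.1 τ.2 i hσi hτeq)
    · intro f
      exact coh_transfer (OpenOK N ℓ c₁ cN) (AmpO (lamGen lam1))
        (fun σ => diagO ℓ N lam1 σ.1) (fun σ => diagO_ne_zero hnz σ.1)
        (conj_eq _ _ _
          (fun σ τ i hσi hτeq => open_entry lam1 hnz σ.1 τ.1 τ.2 i hσi hτeq)) f
  · refine ⟨fun σ => diagP_ne_zero hnz σ.1, ?_, ?_⟩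
    · exact conj_eq (PerOK N ℓ) (AmpP (lamGen lam1))
        (fun σ => diagP ℓ N lam1 σ.1)
        (fun σ τ i hσi hτeq => per_entry lam1 hnz σ.1 τ.1 τ.2 i hσi hτeq)
    · intro f
      exact coh_transfer (PerOK N ℓ) (AmpP (lamGen lam1))
        (fun σ => diagP ℓ N lam1 σ.1) (fun σ => diagP_ne_zero hnz σ.1)
        (conj_eq _ _ _
          (fun σ τ i hσi hτeq => per_entry lam1 hnz σ.1 τ.1 τ.2 i hσi hτeq)) f

end
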